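/- Let ℓ(β,γ) be a convex quadratic function on ℝ^{p+m} with Hessian H, and let the Split LBI iterations satisfy β_{k+1} = β_k − κα∇_β ℓ(β_k,γ_k), ρ_{k+1} + γ_{k+1}/κ = ρ_k + γ_k/κ − α∇_γ ℓ(β_k,γ_k) with ρ_k ∈ ∂‖γ_k‖₁ for all k, where κ, α > 0. If κα‖H‖₂ ≤ 2, then ℓ(β_{k+1},γ_{k+1}) ≤ ℓ(β_k,γ_k) for all k. -/

import Mathlib

open Matrix

/-- Euclidean operator norm of a real matrix. -/
noncomputable def matOpNorm {a b : Type*} [Fintype a] [Fintype b] [DecidableEq b]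
    (M : Matrix a b ℝ) : ℝ :=
  ‖LinearMap.toContinuousLinearMap (Matrix.toEuclideanLin M)‖

/-- `ρ ∈ ∂‖γ‖₁`. -/
def IsL1Subgradient {m : ℕ} (ρ γ : Fin m → ℝ) : Prop :=
  ∀ j, (γ j ≠ 0 → ρ j = Real.sign (γ j)) ∧ |ρ j| ≤ 1

lemma quadform_le_matOpNorm {n : Type*} [Fintype n] [DecidableEq n]
    (M : Matrix n n ℝ) (x : n → ℝ) :
    x ⬝ᵥ M.mulVec x ≤ matOpNorm M * (x ⬝ᵥ x) := by
  set A := LinearMap.toContinuousLinearMap (Matrix.toEuclideanLin M) with hA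
  set X : EuclideanSpace ℝ n := (WithLp.equiv 2 _).symm x with hX
  have hAX : (A X : EuclideanSpace ℝ n) = (WithLp.equiv 2 _).symm (M.mulVec x) := by
    simp [hA, hX, Matrix.toEuclideanLin_apply]
  have h1 : x ⬝ᵥ M.mulVec x = (inner ℝ X (A X) : ℝ) := by
    rw [hAX, PiLp.inner_apply]
    simp [dotProduct, hX, mul_comm]
  have h2 : (inner ℝ X (A X) : ℝ) ≤ ‖X‖ * ‖A X‖ := real_inner_le_norm X (A X)
  have h3 : ‖A X‖ ≤ matOpNorm M * ‖X‖ := A.le_opNorm X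
  have h4 : ‖X‖ ^ 2 = x ⬝ᵥ x := by
    rw [← real_inner_self_eq_norm_sq, PiLp.inner_apply]
    simp [dotProduct, hX, sq]
  have h0 : (0:ℝ) ≤ matOpNorm M := norm_nonneg _
  nlinarith [norm_nonneg X, norm_nonneg (A X)]

lemma subgrad_mul_self (r x : ℝ) (h : x ≠ 0 → r = Real.sign x) : r * x = |x| := by
  rcases lt_trichotomy x 0 with hx | hx | hx
  · rw [h hx.ne, Real.sign_of_neg hx, abs_of_neg hx]; ring
  · simp [hx]
  · rw [h hx.ne', Real.sign_of_pos hx, abs_of_pos hx]; ring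

lemma subgrad_mul_le (r x : ℝ) (hb : |r| ≤ 1) : r * x ≤ |x| :=
  calc r * x ≤ |r * x| := le_abs_self _
    _ = |r| * |x| := abs_mul _ _
    _ ≤ 1 * |x| := by nlinarith [abs_nonneg x]
    _ = |x| := one_mul _

lemma dot_self_nonneg' {n : Type*} [Fintype n] (x : n → ℝ) : 0 ≤ x ⬝ᵥ x :=
  Finset.sum_nonneg fun i _ => mul_self_nonneg (x i)

/-- For a convex quadratic loss `ℓ` with Hessian `H`, the Split LBI iterations
with `κα‖H‖₂ ≤ 2` have non-increasing loss. -/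
theorem splitLBI_loss_nonincreasing {p m : ℕ}
    (ℓ : (Fin p → ℝ) → (Fin m → ℝ) → ℝ)
    (gβ : (Fin p → ℝ) → (Fin m → ℝ) → (Fin p → ℝ))
    (gγ : (Fin p → ℝ) → (Fin m → ℝ) → (Fin m → ℝ))
    (H : Matrix (Fin p ⊕ Fin m) (Fin p ⊕ Fin m) ℝ)
    (hHpsd : H.PosSemidef)
    (hquad : ∀ (β : Fin p → ℝ) (γ : Fin m → ℝ) (β' : Fin p → ℝ) (γ' : Fin m → ℝ),
      ℓ β' γ' = ℓ β γ + gβ β γ ⬝ᵥ (β' - β) + gγ β γ ⬝ᵥ (γ' - γ) +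
        (1 / 2) * ((Sum.elim (β' - β) (γ' - γ)) ⬝ᵥ H.mulVec (Sum.elim (β' - β) (γ' - γ))))
    (κ α : ℝ) (hκ : 0 < κ) (hα : 0 < α) (hstep : κ * α * matOpNorm H ≤ 2)
    (β : ℕ → Fin p → ℝ) (γ : ℕ → Fin m → ℝ) (ρ : ℕ → Fin m → ℝ)
    (hβ : ∀ k, β (k + 1) = β k - (κ * α) • gβ (β k) (γ k))
    (hγ : ∀ k j, ρ (k + 1) j + γ (k + 1) j / κ = ρ k j + γ k j / κ - α * gγ (β k) (γ k) j)
    (hρ : ∀ k, IsL1Subgradient (ρ k) (γ k)) :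
    ∀ k, ℓ (β (k + 1)) (γ (k + 1)) ≤ ℓ (β k) (γ k) := by
  intro k
  set c := κ * α with hc
  have hc0 : 0 < c := mul_pos hκ hα
  set G := gβ (β k) (γ k) with hG
  set Gg := gγ (β k) (γ k) with hGg
  set db := β (k + 1) - β k with hdb
  set dg := γ (k + 1) - γ k with hdg
  set N := matOpNorm H with hN
  have hN0 : 0 ≤ N := norm_nonneg _
  -- β step
  have hdbG : db = (-c) • G := by
    rw [hdb, hβ k]; funext i; simp [hG]
  have hGdb : G ⬝ᵥ db = -c * (G ⬝ᵥ G) := by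
    rw [hdbG, dotProduct_smul, smul_eq_mul]
  have hdbdb : db ⬝ᵥ db = c ^ 2 * (G ⬝ᵥ G) := by
    rw [hdbG, smul_dotProduct, dotProduct_smul, smul_eq_mul, smul_eq_mul]; ring
  -- γ step: per-coordinate bound
  have hmono : ∀ j, 0 ≤ (ρ (k + 1) j - ρ k j) * dg j := by
    intro j
    have h0 := hρ k j
    have h1 := hρ (k + 1) j
    have e0 : ρ k j * γ k j = |γ k j| := subgrad_mul_self _ _ h0.1
    have e1 : ρ (k + 1) j * γ (k + 1) j = |γ (k + 1) j| := subgrad_mul_self _ _ h1.1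
    have e2 : ρ (k + 1) j * γ k j ≤ |γ k j| := subgrad_mul_le _ _ h1.2
    have e3 : ρ k j * γ (k + 1) j ≤ |γ (k + 1) j| := subgrad_mul_le _ _ h0.2
    have : (ρ (k + 1) j - ρ k j) * (γ (k + 1) j - γ k j) =
        ρ (k + 1) j * γ (k + 1) j - ρ (k + 1) j * γ k j
        - ρ k j * γ (k + 1) j + ρ k j * γ k j := by ring
    simp only [hdg, Pi.sub_apply]
    nlinarith
  have hGgdg : Gg ⬝ᵥ dg ≤ -(1 / c) * (dg ⬝ᵥ dg) := by
    have hterm : ∀ j ∈ Finset.univ, Gg j * dg j ≤ -(1 / c) * (dg j * dg j) := by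
      intro j _
      have hj := hγ k j
      set r := ρ (k + 1) j - ρ k j with hr
      set d := dg j with hd
      set a := Gg j with ha
      have hm : 0 ≤ r * d := hmono j
      have hka : κ * α * a = -(κ * r) - d := by
        have h := hj
        field_simp at h
        have hd' : d = γ (k + 1) j - γ k j := by simp [hd, hdg]
        rw [hr, hd', ha, hGg]
        linarith
      have h6 : κ * α * (a * d) = -(κ * (r * d)) - d * d := by
        rw [show κ * α * (a * d) = (κ * α * a) * d by ring, hka]; ring
      have h7 : a * d ≤ -(d * d) / c := by
        rw [le_div_iff₀ hc0, hc]
        nlinarith [mul_nonneg hκ.le hm]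
      have h8 : -(1 / c) * (d * d) = -(d * d) / c := by ring
      linarith
    calc Gg ⬝ᵥ dg = ∑ j, Gg j * dg j := rfl
      _ ≤ ∑ j, -(1 / c) * (dg j * dg j) := Finset.sum_le_sum hterm
      _ = -(1 / c) * (dg ⬝ᵥ dg) := by rw [dotProduct, Finset.mul_sum]
  -- quadratic term
  set x : Fin p ⊕ Fin m → ℝ := Sum.elim db dg with hx
  have hxx : x ⬝ᵥ x = db ⬝ᵥ db + dg ⬝ᵥ dg := by
    simp [hx, dotProduct, Fintype.sum_sum_type]
  have hquadterm : x ⬝ᵥ H.mulVec x ≤ N * (db ⬝ᵥ db + dg ⬝ᵥ dg) := by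
    rw [← hxx]; exact quadform_le_matOpNorm H x
  -- combine
  have key := hquad (β k) (γ k) (β (k + 1)) (γ (k + 1))
  rw [key]
  have hGdb' : G ⬝ᵥ db = -(1 / c) * (db ⬝ᵥ db) := by
    rw [hGdb, hdbdb]; field_simp
  have hSb : 0 ≤ db ⬝ᵥ db := dot_self_nonneg' db
  have hSg : 0 ≤ dg ⬝ᵥ dg := dot_self_nonneg' dg
  have hstep' : c * N ≤ 2 := hstep
  have hinv : N / 2 ≤ 1 / c := by
    rw [div_le_div_iff₀ (by norm_num) hc0]; nlinarith
  have := hGgdg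
  nlinarith [mul_le_mul_of_nonneg_left hquadterm (by norm_num : (0:ℝ) ≤ 1/2),
    mul_le_mul_of_nonneg_right hinv (add_nonneg hSb hSg)]
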